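/- In ℂ[x₂,x₃,x₄], set ℒ̃₂ = ℒ₂ + x₂·ℒ₀. Then ℒ̃₂ x₂ = (2/3)·ℒ₁(ℒ₁ x₂) (the heat equation identity in the nonholonomic frame), and the commutator satisfies [ℒ₁, ℒ̃₂] = x₃·ℒ₀, i.e. ℒ₁(ℒ̃₂P) − ℒ̃₂(ℒ₁P) = x₃·ℒ₀P for every polynomial P ∈ ℂ[x₂,x₃,x₄]; in particular [ℒ₁, ℒ̃₂] ≠ 0. -/
import Mathlib


open MvPolynomial

noncomputable section

/-- The polynomial ring ℂ[x₂,x₃,x₄]; `X 0 = x₂`, `X 1 = x₃`, `X 2 = x₄`. -/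
abbrev R3 : Type := MvPolynomial (Fin 3) ℂ

def x2 : R3 := X 0
def x3 : R3 := X 1
def x4 : R3 := X 2

/-- ℒ₀ = 2x₂∂/∂x₂ + 3x₃∂/∂x₃ + 4x₄∂/∂x₄ -/
def L0 (P : R3) : R3 :=
  2 * x2 * pderiv (0 : Fin 3) P + 3 * x3 * pderiv (1 : Fin 3) P + 4 * x4 * pderiv (2 : Fin 3) P

/-- ℒ₁ = x₃∂/∂x₂ + x₄∂/∂x₃ + 12x₂x₃∂/∂x₄ -/
def L1 (P : R3) : R3 :=
  x3 * pderiv (0 : Fin 3) P + x4 * pderiv (1 : Fin 3) P + 12 * x2 * x3 * pderiv (2 : Fin 3) P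

/-- ℒ₂ = ((2/3)x₄ − 2x₂²)∂/∂x₂ + 3x₂x₃∂/∂x₃ + (3x₃² + 2x₂x₄)∂/∂x₄ -/
def L2 (P : R3) : R3 :=
  (C (2/3 : ℂ) * x4 - 2 * x2 ^ 2) * pderiv (0 : Fin 3) P + 3 * x2 * x3 * pderiv (1 : Fin 3) P
    + (3 * x3 ^ 2 + 2 * x2 * x4) * pderiv (2 : Fin 3) P

/-- ℒ̃₂ = ℒ₂ + x₂·ℒ₀ -/
def Lt2 (P : R3) : R3 := L2 P + x2 * L0 P

lemma pderiv_pderiv_X (i j k : Fin 3) :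
    pderiv i (pderiv j (X k : R3)) = 0 := by
  rcases eq_or_ne k j with h | h
  · subst h; simp
  · simp [pderiv_X_of_ne h]

lemma pderiv_ofNat (i : Fin 3) (n : ℕ) [n.AtLeastTwo] :
    pderiv i (no_index (OfNat.ofNat n) : R3) = 0 := by
  have h := Derivation.map_natCast (pderiv i : Derivation ℂ R3 R3) (OfNat.ofNat n)
  simpa using h

lemma pderiv_comm' (i j : Fin 3) (P : R3) :
    pderiv i (pderiv j P) = pderiv j (pderiv i P) := by
  induction P using MvPolynomial.induction_on with
  | C a => simp
  | add p q hp hq => simp [hp, hq]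
  | mul_X p k hp =>
    simp only [Derivation.leibniz, smul_eq_mul, map_add, map_mul, hp, pderiv_pderiv_X,
      mul_zero, zero_mul, add_zero, zero_add]
    ring

theorem heat_equation_nonholonomic_frame :
    Lt2 x2 = C (2/3 : ℂ) * L1 (L1 x2) ∧
    (∀ P : R3, L1 (Lt2 P) - Lt2 (L1 P) = x3 * L0 P) ∧
    (fun P : R3 => L1 (Lt2 P) - Lt2 (L1 P)) ≠ (fun _ : R3 => 0) := by
  have key : ∀ P : R3, L1 (Lt2 P) - Lt2 (L1 P) = x3 * L0 P := by
    intro P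
    simp only [L0, L1, L2, Lt2, x2, x3, x4, map_add, map_mul, map_sub, Derivation.leibniz,
      smul_eq_mul, pderiv_X_self, pderiv_X_of_ne (by decide : (1:Fin 3) ≠ 0),
      pderiv_X_of_ne (by decide : (2:Fin 3) ≠ 0), pderiv_X_of_ne (by decide : (0:Fin 3) ≠ 1),
      pderiv_X_of_ne (by decide : (2:Fin 3) ≠ 1), pderiv_X_of_ne (by decide : (0:Fin 3) ≠ 2),
      pderiv_X_of_ne (by decide : (1:Fin 3) ≠ 2), pderiv_C, Derivation.leibniz_pow, pderiv_ofNat, nsmul_eq_mul,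
      pderiv_comm' 0 1 P, pderiv_comm' 0 2 P, pderiv_comm' 1 2 P]
    have h : (C (2/3 : ℂ) : R3) * 12 = 8 := by
      rw [show (12 : R3) = C 12 from (map_ofNat C 12).symm, ← map_mul,
        show (8 : R3) = C 8 from (map_ofNat C 8).symm]
      norm_num
    linear_combination (X 1 * (X 0 : R3) * (pderiv (0 : Fin 3)) P
      - X 1 * X 2 * (pderiv (2 : Fin 3)) P) * h
  refine ⟨?_, key, ?_⟩
  · simp [Lt2, L2, L1, L0, x2, x3, x4, pderiv_X_of_ne (by decide : (1:Fin 3) ≠ 0),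
      pderiv_X_of_ne (by decide : (2:Fin 3) ≠ 0), pderiv_X_of_ne (by decide : (0:Fin 3) ≠ 1),
      pderiv_X_of_ne (by decide : (2:Fin 3) ≠ 1)]
    ring
  · intro h
    have h2 := congrFun h x2
    rw [key] at h2
    simp only [L0, x2, x3, x4, pderiv_X_self, pderiv_X_of_ne (by decide : (0:Fin 3) ≠ 1),
      pderiv_X_of_ne (by decide : (0:Fin 3) ≠ 2), mul_zero, mul_one, add_zero] at h2
    have : (X 1 * (2 * X 0) : R3) ≠ 0 := by
      simp [mul_ne_zero, X_ne_zero]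
    exact this h2
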